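/- The vector space L consisting of all vector fields of the form c Θ^0_0 + d F^{−1}_0 + Σ_{k≥1, −1≤l≤k} a^l_k F^l_k + Σ_{n≥1, 0≤m≤n} b^m_n Θ^m_n (with real coefficients c, d, a^l_k, b^m_n; note that F^0_0 is excluded) is closed under the Lie bracket of vector fields, and hence is a Lie algebra. -/

import Mathlib

noncomputable section
open MvPolynomial

/-- Polynomial functions of the variables x, y, z (indexed `0, 1, 2`). -/
abbrev Poly3 := MvPolynomial (Fin 3) ℝ

/-- Polynomial vector fields on ℝ³, given by their three components. -/
abbrev VF3 := Fin 3 → Poly3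

/-- The derivation action `v(g) = v₁ ∂g/∂x + v₂ ∂g/∂y + v₃ ∂g/∂z`. -/
def applyVF (v : VF3) (g : Poly3) : Poly3 := ∑ i, v i * pderiv i g

/-- The Lie bracket `[v,w] := v∘w − w∘v`, with i-th component `v(wᵢ) − w(vᵢ)`. -/
def bracket (v w : VF3) : VF3 := fun i => applyVF v (w i) - applyVF w (v i)

/-- The divergence `div v = ∂v₁/∂x + ∂v₂/∂y + ∂v₃/∂z`. -/
def divergence (v : VF3) : Poly3 := ∑ i, pderiv i (v i)

/-- The vector field `F^l_k := x^l (y²+z²)^{k−l} ((k−l+1) x ∂_x − ((l+1)/2) y ∂_y − ((l+1)/2) z ∂_z)`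
for integers `−1 ≤ l ≤ k`; for `l = −1` the second and third components vanish and this is
`(k+2)(y²+z²)^{k+1} ∂_x`. -/
def Fvf (l k : ℤ) : VF3 :=
  ![C ((k - l + 1 : ℤ) : ℝ) * X 0 ^ (l + 1).toNat * (X 1 ^ 2 + X 2 ^ 2) ^ (k - l).toNat,
    C (-((l + 1 : ℤ) : ℝ) / 2) * X 0 ^ l.toNat * X 1 * (X 1 ^ 2 + X 2 ^ 2) ^ (k - l).toNat,
    C (-((l + 1 : ℤ) : ℝ) / 2) * X 0 ^ l.toNat * X 2 * (X 1 ^ 2 + X 2 ^ 2) ^ (k - l).toNat]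

/-- The vector field `Θ^m_n := x^m (y²+z²)^{n−m} (z ∂_y − y ∂_z)` for integers `0 ≤ m ≤ n`. -/
def Tvf (m n : ℤ) : VF3 :=
  ![0,
    X 0 ^ m.toNat * (X 1 ^ 2 + X 2 ^ 2) ^ (n - m).toNat * X 2,
    -(X 0 ^ m.toNat * (X 1 ^ 2 + X 2 ^ 2) ^ (n - m).toNat * X 1)]

/-- The generating set of the space `L`: `Θ^0_0`, `F^{−1}_0`, the `F^l_k` with
`k ≥ 1, −1 ≤ l ≤ k`, and the `Θ^m_n` with `n ≥ 1, 0 ≤ m ≤ n` (so `F^0_0` is excluded). -/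
def Lset : Set VF3 :=
  {v | v = Tvf 0 0 ∨ v = Fvf (-1) 0 ∨
    (∃ l k : ℤ, 1 ≤ k ∧ -1 ≤ l ∧ l ≤ k ∧ v = Fvf l k) ∨
    ∃ m n : ℤ, 1 ≤ n ∧ 0 ≤ m ∧ m ≤ n ∧ v = Tvf m n}

def mon (c : ℝ) (e f : ℕ) (w : Poly3) : Poly3 :=
  C c * X 0 ^ e * (X 1 ^ 2 + X 2 ^ 2) ^ f * w

def Gn (a b : ℕ) : VF3 :=
  ![mon (2*b+2) a b 1, mon (-(a:ℝ)) (a-1) b (X 1), mon (-(a:ℝ)) (a-1) b (X 2)]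

def Tn (m ν : ℕ) : VF3 := ![0, mon 1 m ν (X 2), mon (-1) m ν (X 1)]

lemma pd00 : pderiv (0:Fin 3) (X 0 : Poly3) = 1 := pderiv_X_self _
lemma pd01 : pderiv (0:Fin 3) (X 1 : Poly3) = 0 := pderiv_X_of_ne (by decide)
lemma pd02 : pderiv (0:Fin 3) (X 2 : Poly3) = 0 := pderiv_X_of_ne (by decide)
lemma pd10 : pderiv (1:Fin 3) (X 0 : Poly3) = 0 := pderiv_X_of_ne (by decide)
lemma pd11 : pderiv (1:Fin 3) (X 1 : Poly3) = 1 := pderiv_X_self _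
lemma pd12 : pderiv (1:Fin 3) (X 2 : Poly3) = 0 := pderiv_X_of_ne (by decide)
lemma pd20 : pderiv (2:Fin 3) (X 0 : Poly3) = 0 := pderiv_X_of_ne (by decide)
lemma pd21 : pderiv (2:Fin 3) (X 1 : Poly3) = 0 := pderiv_X_of_ne (by decide)
lemma pd22 : pderiv (2:Fin 3) (X 2 : Poly3) = 1 := pderiv_X_self _

lemma applyA (b : ℕ) (c : ℝ) (e f : ℕ) :
    applyVF (Gn 0 b) (mon c e f 1) = mon (2*c*(b+1)*e) (e-1) (b+f) 1 := by
  rcases e with _|e <;>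
  simp only [applyVF, Gn, mon, Fin.sum_univ_three, Matrix.cons_val_zero, Matrix.cons_val_one,
    Matrix.head_cons, Matrix.cons_val_two, Matrix.tail_cons, pderiv_mul, pderiv_pow,
    map_add, map_mul, map_natCast, map_neg, map_one, map_ofNat, map_zero, map_sub, sub_self, sub_zero, pderiv_C,
    pd00, pd01, pd02, pd10, pd11, pd12, pd20, pd21, pd22,
    Nat.add_sub_cancel, Nat.zero_sub, Nat.sub_zero, Nat.cast_zero, Nat.cast_add, Nat.cast_one,
    Nat.cast_ofNat, pow_zero, mul_one, mul_zero, zero_mul, add_zero, zero_add, neg_zero] <;>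
  push_cast <;> ring

lemma applyB (a b : ℕ) (c : ℝ) (e f : ℕ) :
    applyVF (Gn (a+1) b) (mon c e f 1) =
      mon (2*c*((b+1)*e - (a+1)*f)) (a+e) (b+f) 1 := by
  rcases e with _|e <;> rcases f with _|f <;>
  simp only [applyVF, Gn, mon, Fin.sum_univ_three, Matrix.cons_val_zero, Matrix.cons_val_one,
    Matrix.head_cons, Matrix.cons_val_two, Matrix.tail_cons, pderiv_mul, pderiv_pow,
    map_add, map_mul, map_natCast, map_neg, map_one, map_ofNat, map_zero, map_sub, sub_self, sub_zero, pderiv_C,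
    pd00, pd01, pd02, pd10, pd11, pd12, pd20, pd21, pd22,
    Nat.add_sub_cancel, Nat.zero_sub, Nat.sub_zero, Nat.cast_zero, Nat.cast_add, Nat.cast_one,
    Nat.cast_ofNat, pow_zero, mul_one, mul_zero, zero_mul, add_zero, zero_add, neg_zero] <;>
  push_cast <;> ring

lemma applyC1 (b : ℕ) (c : ℝ) (e f : ℕ) :
    applyVF (Gn 0 b) (mon c e f (X 1)) = mon (2*c*(b+1)*e) (e-1) (b+f) (X 1) := by
  rcases e with _|e <;>
  simp only [applyVF, Gn, mon, Fin.sum_univ_three, Matrix.cons_val_zero, Matrix.cons_val_one,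
    Matrix.head_cons, Matrix.cons_val_two, Matrix.tail_cons, pderiv_mul, pderiv_pow,
    map_add, map_mul, map_natCast, map_neg, map_one, map_ofNat, map_zero, map_sub, sub_self,
    sub_zero, pderiv_C,
    pd00, pd01, pd02, pd10, pd11, pd12, pd20, pd21, pd22,
    Nat.add_sub_cancel, Nat.zero_sub, Nat.sub_zero, Nat.cast_zero, Nat.cast_add, Nat.cast_one,
    Nat.cast_ofNat, pow_zero, mul_one, mul_zero, zero_mul, add_zero, zero_add, neg_zero] <;>
  push_cast <;> ring

lemma applyC2 (b : ℕ) (c : ℝ) (e f : ℕ) :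
    applyVF (Gn 0 b) (mon c e f (X 2)) = mon (2*c*(b+1)*e) (e-1) (b+f) (X 2) := by
  rcases e with _|e <;>
  simp only [applyVF, Gn, mon, Fin.sum_univ_three, Matrix.cons_val_zero, Matrix.cons_val_one,
    Matrix.head_cons, Matrix.cons_val_two, Matrix.tail_cons, pderiv_mul, pderiv_pow,
    map_add, map_mul, map_natCast, map_neg, map_one, map_ofNat, map_zero, map_sub, sub_self,
    sub_zero, pderiv_C,
    pd00, pd01, pd02, pd10, pd11, pd12, pd20, pd21, pd22,
    Nat.add_sub_cancel, Nat.zero_sub, Nat.sub_zero, Nat.cast_zero, Nat.cast_add, Nat.cast_one,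
    Nat.cast_ofNat, pow_zero, mul_one, mul_zero, zero_mul, add_zero, zero_add, neg_zero] <;>
  push_cast <;> ring

lemma applyD1 (a b : ℕ) (c : ℝ) (e f : ℕ) :
    applyVF (Gn (a+1) b) (mon c e f (X 1)) =
      mon (c*(2*(b+1)*e - (a+1)*(2*f+1))) (a+e) (b+f) (X 1) := by
  rcases e with _|e <;> rcases f with _|f <;>
  simp only [applyVF, Gn, mon, Fin.sum_univ_three, Matrix.cons_val_zero, Matrix.cons_val_one,
    Matrix.head_cons, Matrix.cons_val_two, Matrix.tail_cons, pderiv_mul, pderiv_pow,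
    map_add, map_mul, map_natCast, map_neg, map_one, map_ofNat, map_zero, map_sub, sub_self,
    sub_zero, pderiv_C,
    pd00, pd01, pd02, pd10, pd11, pd12, pd20, pd21, pd22,
    Nat.add_sub_cancel, Nat.zero_sub, Nat.sub_zero, Nat.cast_zero, Nat.cast_add, Nat.cast_one,
    Nat.cast_ofNat, pow_zero, mul_one, mul_zero, zero_mul, add_zero, zero_add, neg_zero] <;>
  push_cast <;> ring

lemma applyD2 (a b : ℕ) (c : ℝ) (e f : ℕ) :
    applyVF (Gn (a+1) b) (mon c e f (X 2)) =
      mon (c*(2*(b+1)*e - (a+1)*(2*f+1))) (a+e) (b+f) (X 2) := by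
  rcases e with _|e <;> rcases f with _|f <;>
  simp only [applyVF, Gn, mon, Fin.sum_univ_three, Matrix.cons_val_zero, Matrix.cons_val_one,
    Matrix.head_cons, Matrix.cons_val_two, Matrix.tail_cons, pderiv_mul, pderiv_pow,
    map_add, map_mul, map_natCast, map_neg, map_one, map_ofNat, map_zero, map_sub, sub_self,
    sub_zero, pderiv_C,
    pd00, pd01, pd02, pd10, pd11, pd12, pd20, pd21, pd22,
    Nat.add_sub_cancel, Nat.zero_sub, Nat.sub_zero, Nat.cast_zero, Nat.cast_add, Nat.cast_one,
    Nat.cast_ofNat, pow_zero, mul_one, mul_zero, zero_mul, add_zero, zero_add, neg_zero] <;>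
  push_cast <;> ring

lemma applyT0 (m ν : ℕ) (c : ℝ) (e f : ℕ) :
    applyVF (Tn m ν) (mon c e f 1) = 0 := by
  simp only [applyVF, Tn, mon, Fin.sum_univ_three, Matrix.cons_val_zero, Matrix.cons_val_one,
    Matrix.head_cons, Matrix.cons_val_two, Matrix.tail_cons, pderiv_mul, pderiv_pow,
    map_add, map_mul, map_natCast, map_neg, map_one, map_ofNat, map_zero, map_sub, sub_self,
    sub_zero, pderiv_C,
    pd00, pd01, pd02, pd10, pd11, pd12, pd20, pd21, pd22,
    Nat.add_sub_cancel, Nat.zero_sub, Nat.sub_zero, Nat.cast_zero, Nat.cast_add, Nat.cast_one,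
    Nat.cast_ofNat, pow_zero, mul_one, mul_zero, zero_mul, add_zero, zero_add, neg_zero]
  ring

lemma applyT1 (m ν : ℕ) (c : ℝ) (e f : ℕ) :
    applyVF (Tn m ν) (mon c e f (X 1)) = mon c (m+e) (ν+f) (X 2) := by
  simp only [applyVF, Tn, mon, Fin.sum_univ_three, Matrix.cons_val_zero, Matrix.cons_val_one,
    Matrix.head_cons, Matrix.cons_val_two, Matrix.tail_cons, pderiv_mul, pderiv_pow,
    map_add, map_mul, map_natCast, map_neg, map_one, map_ofNat, map_zero, map_sub, sub_self,
    sub_zero, pderiv_C,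
    pd00, pd01, pd02, pd10, pd11, pd12, pd20, pd21, pd22,
    Nat.add_sub_cancel, Nat.zero_sub, Nat.sub_zero, Nat.cast_zero, Nat.cast_add, Nat.cast_one,
    Nat.cast_ofNat, pow_zero, mul_one, mul_zero, zero_mul, add_zero, zero_add, neg_zero]
  ring

lemma applyT2 (m ν : ℕ) (c : ℝ) (e f : ℕ) :
    applyVF (Tn m ν) (mon c e f (X 2)) = mon (-c) (m+e) (ν+f) (X 1) := by
  simp only [applyVF, Tn, mon, Fin.sum_univ_three, Matrix.cons_val_zero, Matrix.cons_val_one,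
    Matrix.head_cons, Matrix.cons_val_two, Matrix.tail_cons, pderiv_mul, pderiv_pow,
    map_add, map_mul, map_natCast, map_neg, map_one, map_ofNat, map_zero, map_sub, sub_self,
    sub_zero, pderiv_C,
    pd00, pd01, pd02, pd10, pd11, pd12, pd20, pd21, pd22,
    Nat.add_sub_cancel, Nat.zero_sub, Nat.sub_zero, Nat.cast_zero, Nat.cast_add, Nat.cast_one,
    Nat.cast_ofNat, pow_zero, mul_one, mul_zero, zero_mul, add_zero, zero_add, neg_zero]
  ring

lemma applyZ (v : VF3) : applyVF v 0 = 0 := by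
  simp [applyVF]

lemma mon_zero (e f : ℕ) (w : Poly3) : mon 0 e f w = 0 := by simp [mon]

lemma mon_sub_smul {e1 e2 e3 f1 f2 f3 : ℕ} {c1 c2 c3 r : ℝ} (w : Poly3)
    (he1 : e1 = e3) (hf1 : f1 = f3) (he2 : e2 = e3) (hf2 : f2 = f3)
    (hc : c1 - c2 = r * c3) :
    mon c1 e1 f1 w - mon c2 e2 f2 w = r • mon c3 e3 f3 w := by
  have h : C c1 - C c2 = (C r * C c3 : Poly3) := by rw [← map_sub, hc, map_mul]
  simp only [he1, hf1, he2, hf2, mon, smul_eq_C_mul]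
  linear_combination (X 0 ^ e3 * (X 1 ^ 2 + X 2 ^ 2) ^ f3 * w : Poly3) * h

lemma zero_sub_smul {e2 e3 f2 f3 : ℕ} {c2 c3 r : ℝ} (w : Poly3)
    (he2 : e2 = e3) (hf2 : f2 = f3) (hc : -c2 = r * c3) :
    0 - mon c2 e2 f2 w = r • mon c3 e3 f3 w := by
  have h : -C c2 = (C r * C c3 : Poly3) := by rw [← map_neg, hc, map_mul]
  simp only [he2, hf2, mon, smul_eq_C_mul]
  linear_combination (X 0 ^ e3 * (X 1 ^ 2 + X 2 ^ 2) ^ f3 * w : Poly3) * h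

lemma sub_zero_smul {e1 e3 f1 f3 : ℕ} {c1 c3 r : ℝ} (w : Poly3)
    (he1 : e1 = e3) (hf1 : f1 = f3) (hc : c1 = r * c3) :
    mon c1 e1 f1 w - 0 = r • mon c3 e3 f3 w := by
  have h : C c1 = (C r * C c3 : Poly3) := by rw [hc, map_mul]
  simp only [he1, hf1, mon, smul_eq_C_mul]
  linear_combination (X 0 ^ e3 * (X 1 ^ 2 + X 2 ^ 2) ^ f3 * w : Poly3) * h

lemma mon_sub_zero {e1 e2 f1 f2 : ℕ} {c1 c2 : ℝ} (w : Poly3)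
    (he : e1 = e2) (hf : f1 = f2) (hc : c1 = c2) :
    mon c1 e1 f1 w - mon c2 e2 f2 w = 0 := by
  subst he hf hc; exact sub_self _

lemma zero_zero_smul {e f : ℕ} {c r : ℝ} (w : Poly3) (hr : r * c = 0) :
    (0:Poly3) - 0 = r • mon c e f w := by
  simp only [mon, smul_eq_C_mul, sub_zero]
  have h : (C (r*c) : Poly3) = 0 := by rw [hr, map_zero]
  rw [map_mul] at h
  linear_combination (-(X 0 ^ e * (X 1 ^ 2 + X 2 ^ 2) ^ f * w) : Poly3) * h

lemma Gn_c0 (a b : ℕ) : Gn a b 0 = mon (2*b+2) a b 1 := rfl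
lemma Gn_c1 (a b : ℕ) : Gn a b 1 = mon (-(a:ℝ)) (a-1) b (X 1) := rfl
lemma Gn_c2 (a b : ℕ) : Gn a b 2 = mon (-(a:ℝ)) (a-1) b (X 2) := rfl
lemma Tn_c0 (m ν : ℕ) : Tn m ν 0 = 0 := rfl
lemma Tn_c1 (m ν : ℕ) : Tn m ν 1 = mon 1 m ν (X 2) := rfl
lemma Tn_c2 (m ν : ℕ) : Tn m ν 2 = mon (-1) m ν (X 1) := rfl

lemma succ_add_sub_one (x y : ℕ) : x+1+y-1 = x+y := by omega


lemma mon_smul {e1 e3 f1 f3 : ℕ} {c1 c3 r : ℝ} (w : Poly3)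
    (he1 : e1 = e3) (hf1 : f1 = f3) (hc : c1 = r * c3) :
    mon c1 e1 f1 w = r • mon c3 e3 f3 w := by
  have h : C c1 = (C r * C c3 : Poly3) := by rw [hc, map_mul]
  simp only [he1, hf1, mon, smul_eq_C_mul]
  linear_combination (X 0 ^ e3 * (X 1 ^ 2 + X 2 ^ 2) ^ f3 * w : Poly3) * h

lemma neg_mon_smul {e2 e3 f2 f3 : ℕ} {c2 c3 r : ℝ} (w : Poly3)
    (he2 : e2 = e3) (hf2 : f2 = f3) (hc : -c2 = r * c3) :
    -mon c2 e2 f2 w = r • mon c3 e3 f3 w := by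
  have h : -C c2 = (C r * C c3 : Poly3) := by rw [← map_neg, hc, map_mul]
  simp only [he2, hf2, mon, smul_eq_C_mul]
  linear_combination (X 0 ^ e3 * (X 1 ^ 2 + X 2 ^ 2) ^ f3 * w : Poly3) * h

lemma zero_eq_smul {e f : ℕ} {c r : ℝ} (w : Poly3) (hr : r * c = 0) :
    (0:Poly3) = r • mon c e f w := by
  have h : (C (r*c) : Poly3) = 0 := by rw [hr, map_zero]
  rw [map_mul] at h
  simp only [mon, smul_eq_C_mul]
  linear_combination (-(X 0 ^ e * (X 1 ^ 2 + X 2 ^ 2) ^ f * w) : Poly3) * h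

lemma vf_ext {v w : VF3} (h0 : v 0 = w 0) (h1 : v 1 = w 1) (h2 : v 2 = w 2) : v = w := by
  funext i
  fin_cases i
  · exact h0
  · exact h1
  · exact h2

set_option maxHeartbeats 1000000 in
lemma bracket_Gn_Gn (a b a' b' : ℕ) :
    bracket (Gn a b) (Gn a' b') =
      (2*((a':ℝ)*((b:ℝ)+1) - (a:ℝ)*((b':ℝ)+1))) • Gn (a+a'-1) (b+b') := by
  rcases a with _|a <;> rcases a' with _|a' <;>
  · apply vf_ext <;>
    simp only [bracket, Pi.smul_apply, Gn_c0, Gn_c1, Gn_c2, ← add_assoc,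
      Nat.zero_sub, Nat.add_sub_cancel, succ_add_sub_one, Nat.sub_zero,
      add_zero, zero_add, Nat.cast_zero, Nat.cast_add, Nat.cast_one, neg_zero,
      mul_zero, zero_mul, mon_zero, applyZ, sub_zero, zero_sub, sub_self, smul_zero,
      applyA, applyB, applyC1, applyC2, applyD1, applyD2] <;>
    first
      | rfl
      | (exact mon_sub_smul _ (by omega) (by omega) (by omega) (by omega) (by push_cast; ring))
      | (exact mon_smul _ (by omega) (by omega) (by push_cast; ring))
      | (exact neg_mon_smul _ (by omega) (by omega) (by push_cast; ring))
      | (exact zero_eq_smul _ (by push_cast; ring))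
      | (exact mon_sub_zero _ (by omega) (by omega) (by push_cast; ring))
      | skip

set_option maxHeartbeats 1000000 in
lemma bracket_Gn_Tn (a b m ν : ℕ) :
    bracket (Gn a b) (Tn m ν) =
      (2*((m:ℝ)*((b:ℝ)+1) - (a:ℝ)*(ν:ℝ))) • Tn (a+m-1) (b+ν) := by
  rcases a with _|a <;>
  · apply vf_ext <;>
    simp only [bracket, Pi.smul_apply, Gn_c0, Gn_c1, Gn_c2, Tn_c0, Tn_c1, Tn_c2, ← add_assoc,
      Nat.zero_sub, Nat.add_sub_cancel, succ_add_sub_one, Nat.sub_zero,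
      add_zero, zero_add, Nat.cast_zero, Nat.cast_add, Nat.cast_one, neg_zero,
      mul_zero, zero_mul, mon_zero, applyZ, sub_zero, zero_sub, sub_self, smul_zero,
      applyA, applyB, applyC1, applyC2, applyD1, applyD2, applyT0, applyT1, applyT2] <;>
    first
      | rfl
      | (exact mon_sub_smul _ (by omega) (by omega) (by omega) (by omega) (by push_cast; ring))
      | (exact mon_smul _ (by omega) (by omega) (by push_cast; ring))
      | (exact neg_mon_smul _ (by omega) (by omega) (by push_cast; ring))
      | (exact zero_eq_smul _ (by push_cast; ring))
      | (exact mon_sub_zero _ (by omega) (by omega) (by push_cast; ring))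

set_option maxHeartbeats 1000000 in
lemma bracket_Tn_Tn (m ν m' ν' : ℕ) :
    bracket (Tn m ν) (Tn m' ν') = 0 := by
  apply vf_ext <;>
  simp only [bracket, Pi.zero_apply, Tn_c0, Tn_c1, Tn_c2,
    applyZ, applyT0, applyT1, applyT2, sub_zero, zero_sub, sub_self, neg_neg] <;>
  first
    | rfl
    | (exact mon_sub_zero _ (by omega) (by omega) (by push_cast; ring))

lemma bracket_skew (v w : VF3) : bracket w v = -bracket v w := by
  funext i; simp only [bracket, Pi.neg_apply]; ring

lemma applyVF_add_left (v w : VF3) (g : Poly3) :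
    applyVF (v + w) g = applyVF v g + applyVF w g := by
  simp [applyVF, add_mul, Finset.sum_add_distrib]

lemma applyVF_smul_left (r : ℝ) (v : VF3) (g : Poly3) :
    applyVF (r • v) g = r • applyVF v g := by
  simp [applyVF, Finset.smul_sum, smul_mul_assoc]

lemma applyVF_add_right (v : VF3) (g h : Poly3) :
    applyVF v (g + h) = applyVF v g + applyVF v h := by
  simp [applyVF, mul_add, Finset.sum_add_distrib]

lemma applyVF_smul_right (r : ℝ) (v : VF3) (g : Poly3) :
    applyVF v (r • g) = r • applyVF v g := by
  simp [applyVF, Finset.smul_sum, mul_smul_comm]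

lemma applyVF_zero_left (g : Poly3) : applyVF (0 : VF3) g = 0 := by
  simp [applyVF]

lemma bracket_add_left (u v w : VF3) :
    bracket (u + v) w = bracket u w + bracket v w := by
  funext i
  simp only [bracket, Pi.add_apply, applyVF_add_left, applyVF_add_right]
  ring

lemma bracket_add_right (u v w : VF3) :
    bracket u (v + w) = bracket u v + bracket u w := by
  funext i
  simp only [bracket, Pi.add_apply, applyVF_add_left, applyVF_add_right]
  ring

lemma bracket_smul_left (r : ℝ) (v w : VF3) :
    bracket (r • v) w = r • bracket v w := by
  funext i
  simp only [bracket, Pi.smul_apply, applyVF_smul_left, applyVF_smul_right, smul_sub]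

lemma bracket_smul_right (r : ℝ) (v w : VF3) :
    bracket v (r • w) = r • bracket v w := by
  funext i
  simp only [bracket, Pi.smul_apply, applyVF_smul_left, applyVF_smul_right, smul_sub]

lemma bracket_zero_left (w : VF3) : bracket 0 w = 0 := by
  funext i
  simp [bracket, applyVF_zero_left, applyZ]

lemma bracket_zero_right (w : VF3) : bracket w 0 = 0 := by
  funext i
  simp [bracket, applyVF_zero_left, applyZ]

lemma Fvf_c0 (l k : ℤ) : Fvf l k 0 = mon (((k - l + 1 : ℤ) : ℝ)) (l+1).toNat (k-l).toNat 1 := by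
  unfold Fvf mon
  simp only [Matrix.cons_val_zero, mul_one]

lemma Fvf_c1 (l k : ℤ) :
    Fvf l k 1 = mon (-((l + 1 : ℤ) : ℝ) / 2) l.toNat (k-l).toNat (X 1) := by
  unfold Fvf mon
  simp only [Matrix.cons_val_one, Matrix.head_cons, Matrix.cons_val_zero]
  ring

lemma Fvf_c2 (l k : ℤ) :
    Fvf l k 2 = mon (-((l + 1 : ℤ) : ℝ) / 2) l.toNat (k-l).toNat (X 2) := by
  unfold Fvf mon
  simp only [Matrix.cons_val_two, Matrix.tail_cons, Matrix.head_cons]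
  ring

lemma Tvf_c0 (m n : ℤ) : Tvf m n 0 = 0 := rfl

lemma Tvf_c1 (m n : ℤ) : Tvf m n 1 = mon 1 m.toNat (n-m).toNat (X 2) := by
  unfold Tvf mon
  simp only [Matrix.cons_val_one, Matrix.head_cons, Matrix.cons_val_zero, map_one, one_mul]

lemma Tvf_c2 (m n : ℤ) : Tvf m n 2 = mon (-1) m.toNat (n-m).toNat (X 1) := by
  unfold Tvf mon
  simp only [Matrix.cons_val_two, Matrix.tail_cons, Matrix.head_cons, map_neg, map_one]
  ring

lemma Fvf_eq (l k : ℤ) (h1 : -1 ≤ l) (h2 : l ≤ k) :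
    Gn (l+1).toNat (k-l).toNat = (2:ℝ) • Fvf l k := by
  have t1 : (((l+1).toNat : ℤ) : ℝ) = (l : ℝ) + 1 := by
    rw [Int.toNat_of_nonneg (by omega)]; push_cast; ring
  have t2 : (((k-l).toNat : ℤ) : ℝ) = (k : ℝ) - l := by
    rw [Int.toNat_of_nonneg (by omega)]; push_cast; ring
  apply vf_ext
  · rw [Gn_c0, Pi.smul_apply, Fvf_c0]
    refine mon_smul _ rfl rfl ?_
    push_cast at t1 t2 ⊢
    rw [t2]; push_cast; ring
  · rw [Gn_c1, Pi.smul_apply, Fvf_c1]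
    refine mon_smul _ (by omega) rfl ?_
    push_cast at t1 ⊢
    rw [t1]; push_cast; ring
  · rw [Gn_c2, Pi.smul_apply, Fvf_c2]
    refine mon_smul _ (by omega) rfl ?_
    push_cast at t1 ⊢
    rw [t1]; push_cast; ring

lemma Tvf_eq (m n : ℤ) (h1 : 0 ≤ m) (h2 : m ≤ n) :
    Tn m.toNat (n-m).toNat = Tvf m n := by
  apply vf_ext
  · rw [Tn_c0, Tvf_c0]
  · rw [Tn_c1, Tvf_c1]
  · rw [Tn_c2, Tvf_c2]

lemma Gn_mem (a b : ℕ) (h : ¬(b = 0 ∧ a ≤ 1)) : Gn a b ∈ Submodule.span ℝ Lset := by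
  have hF : Fvf ((a:ℤ)-1) ((a:ℤ)-1+b) ∈ Lset := by
    by_cases hk : (1:ℤ) ≤ (a:ℤ)-1+b
    · exact Or.inr (Or.inr (Or.inl ⟨(a:ℤ)-1, (a:ℤ)-1+b, hk, by omega, by omega, rfl⟩))
    · have hab : a = 0 ∧ b = 1 := by omega
      obtain ⟨rfl, rfl⟩ := hab
      refine Or.inr (Or.inl ?_)
      norm_num
  have h2 : Gn a b = (2:ℝ) • Fvf ((a:ℤ)-1) ((a:ℤ)-1+b) := by
    have h3 := Fvf_eq ((a:ℤ)-1) ((a:ℤ)-1+b) (by omega) (by omega)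
    rw [show ((a:ℤ)-1+1).toNat = a by omega,
        show (((a:ℤ)-1+b) - ((a:ℤ)-1)).toNat = b by omega] at h3
    exact h3
  rw [h2]
  exact Submodule.smul_mem _ _ (Submodule.subset_span hF)

lemma Tn_mem (m ν : ℕ) : Tn m ν ∈ Submodule.span ℝ Lset := by
  have h2 : Tn m ν = Tvf (m:ℤ) ((m:ℤ)+ν) := by
    have h3 := Tvf_eq (m:ℤ) ((m:ℤ)+ν) (by omega) (by omega)
    rw [show ((m:ℤ)).toNat = m by omega,
        show (((m:ℤ)+ν) - (m:ℤ)).toNat = ν by omega] at h3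
    exact h3
  have hT : Tvf (m:ℤ) ((m:ℤ)+ν) ∈ Lset := by
    by_cases hn : (1:ℤ) ≤ (m:ℤ)+ν
    · exact Or.inr (Or.inr (Or.inr ⟨(m:ℤ), (m:ℤ)+ν, hn, by omega, by omega, rfl⟩))
    · have hmv : m = 0 ∧ ν = 0 := by omega
      obtain ⟨rfl, rfl⟩ := hmv
      exact Or.inl (by norm_num)
  rw [h2]
  exact Submodule.subset_span hT

lemma half_of (v w : VF3) (h : w = (2:ℝ) • v) : v = (2:ℝ)⁻¹ • w := by
  rw [h, smul_smul]; norm_num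

lemma gen_form (x : VF3) (hx : x ∈ Lset) :
    (∃ a b : ℕ, ¬(b = 0 ∧ a ≤ 1) ∧ x = (2:ℝ)⁻¹ • Gn a b) ∨ (∃ m ν : ℕ, x = Tn m ν) := by
  rcases hx with h | h | ⟨l, k, hk, hl1, hl2, h⟩ | ⟨m, n, hn, hm1, hm2, h⟩
  · right
    refine ⟨0, 0, ?_⟩
    rw [h]
    have h3 := Tvf_eq 0 0 le_rfl le_rfl
    norm_num at h3
    rw [← h3]
  · left
    refine ⟨0, 1, by omega, ?_⟩
    rw [h]
    have h3 := Fvf_eq (-1) 0 (by omega) (by omega)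
    norm_num at h3
    exact half_of _ _ h3
  · left
    refine ⟨(l+1).toNat, (k-l).toNat, by omega, ?_⟩
    rw [h]
    exact half_of _ _ (Fvf_eq l k hl1 hl2)
  · right
    refine ⟨m.toNat, (n-m).toNat, ?_⟩
    rw [h, Tvf_eq m n hm1 hm2]

lemma key : ∀ x ∈ Lset, ∀ y ∈ Lset, bracket x y ∈ Submodule.span ℝ Lset := by
  intro x hx y hy
  rcases gen_form x hx with ⟨a, b, hab, rfl⟩ | ⟨m, ν, rfl⟩ <;>
    rcases gen_form y hy with ⟨a', b', hab', rfl⟩ | ⟨m', ν', rfl⟩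
  · rw [bracket_smul_left, bracket_smul_right, bracket_Gn_Gn]
    refine Submodule.smul_mem _ _ (Submodule.smul_mem _ _ (Submodule.smul_mem _ _ ?_))
    exact Gn_mem _ _ (by omega)
  · rw [bracket_smul_left, bracket_Gn_Tn]
    exact Submodule.smul_mem _ _ (Submodule.smul_mem _ _ (Tn_mem _ _))
  · rw [bracket_skew, bracket_smul_left, bracket_Gn_Tn]
    refine neg_mem (Submodule.smul_mem _ _ (Submodule.smul_mem _ _ (Tn_mem _ _)))
  · rw [bracket_Tn_Tn]
    exact zero_mem _


/-- the vector space `L` spanned by `Θ^0_0`, `F^{−1}_0`,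
`{F^l_k : k ≥ 1, −1 ≤ l ≤ k}` and `{Θ^m_n : n ≥ 1, 0 ≤ m ≤ n}` is closed under the Lie
bracket of vector fields, hence is a Lie algebra. -/
theorem Lset_span_closed_under_bracket :
    ∀ v ∈ Submodule.span ℝ Lset, ∀ w ∈ Submodule.span ℝ Lset,
      bracket v w ∈ Submodule.span ℝ Lset := by
  intro v hv w hw
  induction hv using Submodule.span_induction with
  | mem x hx =>
    induction hw using Submodule.span_induction with
    | mem y hy => exact key x hx y hy
    | zero => rw [bracket_zero_right]; exact zero_mem _
    | add y z _ _ h1 h2 => rw [bracket_add_right]; exact add_mem h1 h2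
    | smul c y _ h => rw [bracket_smul_right]; exact Submodule.smul_mem _ _ h
  | zero => rw [bracket_zero_left]; exact zero_mem _
  | add y z _ _ h1 h2 => rw [bracket_add_left]; exact add_mem h1 h2
  | smul c y _ h => rw [bracket_smul_left]; exact Submodule.smul_mem _ _ h
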